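/- Every rooted tight k-tree (T, r) with k ≥ 2 admits a layering, i.e. there exist m and a tuple L = (L_1, …, L_m) of sets such that {L_1, …, L_m} partitions V(T), |r ∩ L_i| = 1 for all i ∈ [k−1], |L_1| = 1, for each v ∈ L_{i+1} (1 ≤ i < m) there are w ∈ L_i and an edge e of T with {v, w} ⊆ e, and for each edge e of T there is j ∈ [m] such that |e ∩ L_i| = 1 for each j ≤ i < j + k. -/

import Mathlib

open Finset

attribute [local instance] Classical.propDecidable

variable {α : Type*}

/-- The degree of a vertex `v` in a hypergraph `T`: the number of edges containing `v`. -/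
def vdeg [DecidableEq α] (T : Finset (Finset α)) (v : α) : ℕ :=
  (T.filter fun e => v ∈ e).card

/-- The vertex set of a hypergraph: the union of its edges. -/
def hverts [DecidableEq α] (T : Finset (Finset α)) : Finset α := T.sup id

/-- The maximum 1-degree of a hypergraph. -/
def hmaxDeg [DecidableEq α] (T : Finset (Finset α)) : ℕ := (hverts T).sup (vdeg T)

/-- `es` is a valid ordering of the edges of a tight `k`-tree: every edge is a `k`-set, and
every edge except the first contains a vertex `v` not in any previous edge with the rest of
the edge contained in some previous edge. -/
def ValidOrdering [DecidableEq α] (k : ℕ) (es : List (Finset α)) : Prop :=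
  (∀ e ∈ es, e.card = k) ∧
  ∀ i, 0 < i → i < es.length →
    ∃ v ∈ es.getD i ∅,
      (∀ j, j < i → v ∉ es.getD j ∅) ∧
      ∃ j, j < i ∧ (es.getD i ∅) \ {v} ⊆ es.getD j ∅

/-- `T` is a tight `k`-tree: its edges admit a valid ordering. -/
def IsTightTree [DecidableEq α] (k : ℕ) (T : Finset (Finset α)) : Prop :=
  ∃ es : List (Finset α), es ≠ [] ∧ es.Nodup ∧ es.toFinset = T ∧ ValidOrdering k es

/-- `f` belongs to the shadow of the `k`-graph `H`. -/
def InShadow [DecidableEq α] (k : ℕ) (H : Finset (Finset α)) (f : Finset α) : Prop :=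
  f.card = k - 1 ∧ ∃ e ∈ H, f ⊆ e

/-- `H` contains (a copy of) `T`. -/
def Contains {β : Type*} [DecidableEq α] [DecidableEq β]
    (H : Finset (Finset α)) (T : Finset (Finset β)) : Prop :=
  ∃ φ : β → α, Function.Injective φ ∧ ∀ e ∈ T, e.image φ ∈ H

/-- `(L 1, …, L m)` is a layering for the rooted tight `k`-tree `(T, r)`. -/
structure IsLayering [DecidableEq α] (k : ℕ) (T : Finset (Finset α)) (r : Finset α)
    (m : ℕ) (L : ℕ → Finset α) : Prop where
  /-- every layer is nonempty -/
  nonempty : ∀ i, 1 ≤ i → i ≤ m → (L i).Nonempty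
  /-- every layer consists of vertices of `T` -/
  layer_subset : ∀ i, 1 ≤ i → i ≤ m → L i ⊆ hverts T
  /-- the layers are pairwise disjoint -/
  layer_disjoint : ∀ i j, 1 ≤ i → i ≤ m → 1 ≤ j → j ≤ m → i ≠ j → Disjoint (L i) (L j)
  /-- the layers cover `V(T)` -/
  cover : ∀ v ∈ hverts T, ∃ i, 1 ≤ i ∧ i ≤ m ∧ v ∈ L i
  /-- `|r ∩ L i| = 1` for all `i ∈ [k−1]` -/
  root_inter : ∀ i, 1 ≤ i → i ≤ k - 1 → (r ∩ L i).card = 1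
  /-- `|L 1| = 1` -/
  first_card : (L 1).card = 1
  /-- every vertex of `L (i+1)` shares an edge with some vertex of `L i` -/
  link : ∀ i, 1 ≤ i → i < m → ∀ v ∈ L (i + 1), ∃ w ∈ L i, ∃ e ∈ T, v ∈ e ∧ w ∈ e
  /-- every edge meets `k` consecutive layers, each exactly once -/
  window : ∀ e ∈ T, ∃ j, 1 ≤ j ∧ j + (k - 1) ≤ m ∧ ∀ i, j ≤ i → i < j + k → (e ∩ L i).card = 1

lemma getD_mem {l : List (Finset α)} {i : ℕ} (h : i < l.length) : l.getD i ∅ ∈ l := by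
  rw [List.getD_eq_getElem l ∅ h]; exact List.getElem_mem h

lemma forall_mem_iff_getD {l : List (Finset α)} {p : Finset α → Prop} :
    (∀ f ∈ l, p f) ↔ ∀ j, j < l.length → p (l.getD j ∅) := by
  constructor
  · intro h j hj; exact h _ (getD_mem hj)
  · intro h f hf
    obtain ⟨j, hj, rfl⟩ := List.mem_iff_getElem.mp hf
    have := h j hj; rwa [List.getD_eq_getElem l ∅ hj] at this

lemma exists_mem_iff_getD {l : List (Finset α)} {p : Finset α → Prop} :
    (∃ f ∈ l, p f) ↔ ∃ j, j < l.length ∧ p (l.getD j ∅) := by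
  constructor
  · intro ⟨f, hf, hp⟩
    obtain ⟨j, hj, rfl⟩ := List.mem_iff_getElem.mp hf
    exact ⟨j, hj, by rwa [List.getD_eq_getElem l ∅ hj]⟩
  · intro ⟨j, hj, hp⟩; exact ⟨_, getD_mem hj, hp⟩

lemma getD_append_self {l : List (Finset α)} {e : Finset α} :
    (l ++ [e]).getD l.length ∅ = e := by
  rw [List.getD_eq_getElem _ ∅ (by simp), List.getElem_append_right (le_refl _)]
  simp

lemma valid_singleton [DecidableEq α] {k : ℕ} {e : Finset α} :
    ValidOrdering k [e] ↔ e.card = k := by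
  constructor
  · intro h; exact h.1 e (by simp)
  · intro h; exact ⟨by simpa using h, fun i hi hi' => by simp at hi'; omega⟩

lemma valid_append [DecidableEq α] {k : ℕ} {es : List (Finset α)} {e : Finset α}
    (hes : es ≠ []) :
    ValidOrdering k (es ++ [e]) ↔ ValidOrdering k es ∧ e.card = k ∧
      ∃ v ∈ e, (∀ f ∈ es, v ∉ f) ∧ ∃ f ∈ es, e \ {v} ⊆ f := by
  have hlen : (es ++ [e]).length = es.length + 1 := by simp
  constructor
  · intro ⟨hcard, hstep⟩
    have hlpos : 0 < es.length := List.length_pos_iff.mpr hes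
    refine ⟨⟨fun f hf => hcard f (by simp [hf]), fun i hi hi' => ?_⟩, hcard e (by simp), ?_⟩
    · obtain ⟨v, hv, hnew, j, hj, hsub⟩ := hstep i hi (by omega)
      rw [List.getD_append _ _ _ _ hi'] at hv hsub
      exact ⟨v, hv, fun j' hj' => by
        have := hnew j' hj'; rwa [List.getD_append _ _ _ _ (by omega)] at this,
        j, hj, by rwa [List.getD_append _ _ _ _ (by omega)] at hsub⟩
    · obtain ⟨v, hv, hnew, j, hj, hsub⟩ := hstep es.length (by omega) (by omega)
      rw [getD_append_self] at hv hsub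
      refine ⟨v, hv, forall_mem_iff_getD.mpr fun j' hj' => by
        have := hnew j' (by omega); rwa [List.getD_append _ _ _ _ hj'] at this,
        exists_mem_iff_getD.mpr ⟨j, hj, by rwa [List.getD_append _ _ _ _ hj] at hsub⟩⟩
  · intro ⟨⟨hcard, hstep⟩, hek, v, hv, hnew, hex⟩
    refine ⟨?_, fun i hi hi' => ?_⟩
    · intro f hf
      rcases List.mem_append.mp hf with h | h
      · exact hcard f h
      · simp only [List.mem_singleton] at h; subst h; exact hek
    rcases lt_or_eq_of_le (Nat.lt_succ_iff.mp (hlen ▸ hi')) with h | h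
    · obtain ⟨w, hw, hnew', j, hj, hsub⟩ := hstep i hi h
      rw [List.getD_append _ _ _ _ h]
      exact ⟨w, hw, fun j' hj' => by
        rw [List.getD_append _ _ _ _ (by omega)]; exact hnew' j' hj',
        j, hj, by rw [List.getD_append _ _ _ _ (by omega)]; exact hsub⟩
    · subst h
      rw [getD_append_self]
      obtain ⟨f, hf, hsub⟩ := hex
      obtain ⟨j, hj, hsub'⟩ := exists_mem_iff_getD.mp ⟨f, hf, hsub⟩
      exact ⟨v, hv, fun j' hj' => by
        rw [List.getD_append _ _ _ _ hj']; exact forall_mem_iff_getD.mp hnew j' hj',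
        j, hj, by rw [List.getD_append _ _ _ _ hj]; exact hsub'⟩
lemma valid_cons [DecidableEq α] {k : ℕ} {e : Finset α} {es : List (Finset α)}
    (hes : es ≠ []) (hek : e.card = k) (hval : ValidOrdering k es)
    (h1 : ∃ w ∈ es.getD 0 ∅, w ∉ e ∧ (es.getD 0 ∅) \ {w} ⊆ e)
    (hsub : ∀ u ∈ e, ∀ f ∈ es, u ∈ f → u ∈ es.getD 0 ∅) :
    ValidOrdering k (e :: es) := by
  have hgetD : ∀ i, ((e :: es).getD (i+1) ∅) = es.getD i ∅ := fun i => rfl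
  have hgetD0 : (e :: es).getD 0 ∅ = e := rfl
  refine ⟨?_, fun i hi hi' => ?_⟩
  · intro f hf
    rcases List.mem_cons.mp hf with h | h
    · subst h; exact hek
    · exact hval.1 f h
  · simp only [List.length_cons] at hi'
    obtain ⟨i, rfl⟩ : ∃ i', i = i' + 1 := ⟨i - 1, by omega⟩
    rw [hgetD]
    rcases Nat.eq_zero_or_pos i with rfl | hipos
    · obtain ⟨w, hw, hwe, hsub'⟩ := h1
      exact ⟨w, hw, fun j hj => by
        interval_cases j; rwa [hgetD0], 0, by omega, by rwa [hgetD0]⟩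
    · obtain ⟨v, hv, hnew, j, hj, hsub'⟩ := hval.2 i hipos (by omega)
      have hvnotine : v ∉ e := by
        intro hve
        exact hnew 0 hipos (hsub v hve _ (getD_mem (by omega)) hv)
      refine ⟨v, hv, fun j' hj' => ?_, j + 1, by omega, by rw [hgetD]; exact hsub'⟩
      rcases Nat.eq_zero_or_pos j' with rfl | hj'pos
      · rwa [hgetD0]
      · obtain ⟨j'', rfl⟩ : ∃ j'', j' = j'' + 1 := ⟨j' - 1, by omega⟩
        rw [hgetD]; exact hnew j'' (by omega)

lemma reroot [DecidableEq α] {k : ℕ} :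
    ∀ (n : ℕ) (es : List (Finset α)), es.length = n → es ≠ [] → es.Nodup →
    ValidOrdering k es → ∀ e ∈ es, ∃ es' : List (Finset α), es' ≠ [] ∧ es'.Nodup ∧
      es'.toFinset = es.toFinset ∧ ValidOrdering k es' ∧ es'.getD 0 ∅ = e := by
  intro n
  induction n using Nat.strong_induction_on with
  | _ n IH =>
  intro es hlen hne hnd hval e he
  set es₀ := es.dropLast with hes₀
  have hdecomp : es₀ ++ [es.getLast hne] = es := List.dropLast_append_getLast hne
  set el := es.getLast hne with hel
  rcases eq_or_ne es₀ [] with h0 | h0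
  · -- es = [el]
    rw [h0] at hdecomp
    simp only [List.nil_append] at hdecomp
    have : e = el := by
      rw [← hdecomp] at he; simpa using he
    exact ⟨es, hne, hnd, rfl, hval, by rw [← hdecomp, this]; rfl⟩
  · have hlen0 : es₀.length + 1 = es.length := by rw [← hdecomp]; simp
    have hval' := (valid_append (k := k) h0).mp (hdecomp ▸ hval)
    obtain ⟨hval₀, hcardel, vnew, hvnew, hvnewnotin, hex⟩ := hval'
    have hndapp := List.nodup_append'.mp (hdecomp ▸ hnd : (es₀ ++ [el]).Nodup)
    have hnd₀ : es₀.Nodup := hndapp.1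
    have helnotin : el ∉ es₀ := fun h => hndapp.2.2 h (by simp)
    have hmem : e ∈ es₀ ∨ e = el := by
      rw [← hdecomp] at he
      rcases List.mem_append.mp he with h | h
      · exact Or.inl h
      · exact Or.inr (by simpa using h)
    rcases hmem with hmem | rfl
    · -- induct on prefix
      have hlt : es₀.length < n := by rw [← hlen, ← hlen0]; omega
      obtain ⟨es₀', hne', hnd', htf', hval₀', hhead'⟩ :=
        IH es₀.length hlt es₀ rfl h0 hnd₀ hval₀ e hmem
      refine ⟨es₀' ++ [el], by simp, ?_, ?_, ?_, ?_⟩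
      · rw [List.nodup_append']
        exact ⟨hnd', List.nodup_singleton _, fun a ha hb => by
          simp only [List.mem_singleton] at hb; subst hb
          exact helnotin (by rwa [← List.mem_toFinset, htf', List.mem_toFinset] at ha)⟩
      · rw [List.toFinset_append, htf', ← List.toFinset_append, hdecomp]
      · rw [valid_append hne']
        refine ⟨hval₀', hcardel, vnew, hvnew, ?_, ?_⟩
        · intro f hf
          exact hvnewnotin f (by rwa [← List.mem_toFinset, htf', List.mem_toFinset] at hf)
        · obtain ⟨f, hf, hsubf⟩ := hex
          exact ⟨f, by rwa [← List.mem_toFinset, ← htf', List.mem_toFinset] at hf, hsubf⟩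
      · rw [List.getD_append _ _ _ _ (List.length_pos_iff.mpr hne'), hhead']
    · -- e = el : reroot at last edge
      obtain ⟨ej, hej, hsubej⟩ := hex
      have hlt : es₀.length < n := by rw [← hlen, ← hlen0]; omega
      obtain ⟨es₀', hne', hnd', htf', hval₀', hhead'⟩ :=
        IH es₀.length hlt es₀ rfl h0 hnd₀ hval₀ ej hej
      have hk' : k = el.card := hcardel.symm
      have hcardej : ej.card = k := hval₀.1 ej hej
      have hf_card : (el \ {vnew}).card = k - 1 := by
        rw [card_sdiff_of_subset (by simpa using hvnew)]; simp [hcardel]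
      have hvnewej : vnew ∉ ej := hvnewnotin ej hej
      -- the unique vertex w of ej not in el \ {vnew}
      have hdiffcard : (ej \ (el \ {vnew})).card = 1 := by
        have hk1 : 1 ≤ k := hcardel ▸ Finset.card_pos.mpr ⟨vnew, hvnew⟩
        rw [card_sdiff_of_subset hsubej, hcardej, hf_card]
        omega
      obtain ⟨w, hw⟩ := Finset.card_eq_one.mp hdiffcard
      have hwej : w ∈ ej := by
        have : w ∈ ej \ (el \ {vnew}) := hw ▸ Finset.mem_singleton_self w
        exact (Finset.mem_sdiff.mp this).1
      have hwnotf : w ∉ el \ {vnew} := by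
        have : w ∈ ej \ (el \ {vnew}) := hw ▸ Finset.mem_singleton_self w
        exact (Finset.mem_sdiff.mp this).2
      have hwne : w ≠ vnew := fun h => hvnewej (h ▸ hwej)
      have hwnotel : w ∉ el := by
        intro h
        exact hwnotf (Finset.mem_sdiff.mpr ⟨h, by simpa using hwne⟩)
      have hejsub : ej \ {w} ⊆ el := by
        intro u hu
        obtain ⟨hu1, hu2⟩ := Finset.mem_sdiff.mp hu
        simp only [Finset.mem_singleton] at hu2
        by_cases huf : u ∈ el \ {vnew}
        · exact (Finset.mem_sdiff.mp huf).1
        · have : u ∈ ej \ (el \ {vnew}) := Finset.mem_sdiff.mpr ⟨hu1, huf⟩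
          rw [hw, Finset.mem_singleton] at this
          exact absurd this hu2
      refine ⟨el :: es₀', by simp, ?_, ?_, ?_, rfl⟩
      · rw [List.nodup_cons]
        exact ⟨fun h => helnotin (by rwa [← List.mem_toFinset, htf', List.mem_toFinset] at h),
          hnd'⟩
      · rw [List.toFinset_cons, htf', ← hdecomp, List.toFinset_append]
        ext f; simp [or_comm]
      · apply valid_cons hne' hcardel hval₀'
        · rw [hhead']
          refine ⟨w, hwej, hwnotel, ?_⟩
          intro u hu
          exact hejsub hu
        · intro u hu f hf huf
          rw [hhead']
          have hfes₀ : f ∈ es₀ := by rwa [← List.mem_toFinset, htf', List.mem_toFinset] at hf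
          by_cases huv : u = vnew
          · exact absurd huf (huv ▸ hvnewnotin f hfes₀)
          · exact hsubej (Finset.mem_sdiff.mpr ⟨hu, by simpa using huv⟩)
lemma mem_hverts [DecidableEq α] {T : Finset (Finset α)} {v : α} :
    v ∈ hverts T ↔ ∃ e ∈ T, v ∈ e := by simp [hverts, Finset.mem_sup]

lemma filter_card_one {s : Finset α} {f : α → ℕ} (hinj : Set.InjOn f ↑s) {i : ℕ}
    (hi : i ∈ s.image f) : (s.filter (fun v => f v = i)).card = 1 := by
  obtain ⟨v, hv, rfl⟩ := Finset.mem_image.mp hi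
  rw [Finset.card_eq_one]
  refine ⟨v, ?_⟩
  ext w
  simp only [Finset.mem_filter, Finset.mem_singleton]
  constructor
  · rintro ⟨hw, he⟩; exact hinj hw hv he
  · rintro rfl; exact ⟨hv, rfl⟩

lemma image_update_not_mem [DecidableEq α] {s : Finset α} {v : α} (h : v ∉ s) (ℓ : α → ℕ) (t : ℕ) :
    s.image (Function.update ℓ v t) = s.image ℓ :=
  Finset.image_congr (fun u hu => Function.update_of_ne (ne_of_mem_of_not_mem hu h) _ _)

structure Good [DecidableEq α] (k : ℕ) (r : Finset α) (es : List (Finset α))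
    (ℓ : α → ℕ) (M : ℕ) : Prop where
  win : ∀ e ∈ es, ∃ a, 1 ≤ a ∧ a + (k-1) ≤ M ∧ e.image ℓ = Finset.Icc a (a + (k-1))
  img : (hverts es.toFinset).image ℓ = Finset.Icc 1 M
  uniq : ((hverts es.toFinset).filter (fun v => ℓ v = 1)).card = 1
  link : ∀ v ∈ hverts es.toFinset, 2 ≤ ℓ v → ∃ e ∈ es, v ∈ e ∧ ∃ w ∈ e, ℓ w + 1 = ℓ v
  root : r.image ℓ = Finset.Icc 1 (k-1)

lemma good_base [DecidableEq α] {k : ℕ} (hk : 2 ≤ k) {e r : Finset α}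
    (hek : e.card = k) (hrk : r.card = k - 1) (hre : r ⊆ e) :
    ∃ ℓ M, Good k r [e] ℓ M := by
  have hcIcc : r.card = (Finset.Icc 1 (k-1)).card := by
    rw [hrk, Nat.card_Icc]; omega
  set φ := Finset.equivOfCardEq hcIcc with hφ
  set ℓ : α → ℕ := fun v => if h : v ∈ r then (φ ⟨v, h⟩ : ℕ) else k with hℓ
  have hroot : r.image ℓ = Finset.Icc 1 (k-1) := by
    ext t
    simp only [Finset.mem_image]
    constructor
    · rintro ⟨u, hu, rfl⟩
      simp only [hℓ, dif_pos hu]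
      exact (φ ⟨u, hu⟩).2
    · intro ht
      refine ⟨(φ.symm ⟨t, ht⟩).1, (φ.symm ⟨t, ht⟩).2, ?_⟩
      simp only [hℓ, dif_pos (φ.symm ⟨t, ht⟩).2]
      rw [show (⟨(φ.symm ⟨t, ht⟩).1, (φ.symm ⟨t, ht⟩).2⟩ : {x // x ∈ r}) = φ.symm ⟨t, ht⟩
        from Subtype.ext rfl, Equiv.apply_symm_apply]
  have himg : e.image ℓ = Finset.Icc 1 k := by
    ext t
    simp only [Finset.mem_image, Finset.mem_Icc]
    constructor
    · rintro ⟨u, hu, rfl⟩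
      by_cases h : u ∈ r
      · have := Finset.mem_Icc.mp (φ ⟨u, h⟩).2
        simp only [hℓ, dif_pos h]
        omega
      · simp only [hℓ, dif_neg h]
        omega
    · intro ⟨ht1, htk⟩
      by_cases h : t ≤ k - 1
      · have : t ∈ Finset.Icc 1 (k-1) := Finset.mem_Icc.mpr ⟨ht1, h⟩
        rw [← hroot] at this
        obtain ⟨u, hu, hu'⟩ := Finset.mem_image.mp this
        exact ⟨u, hre hu, hu'⟩
      · have ht : t = k := by omega
        have : (e \ r).Nonempty := by
          rw [← Finset.card_pos, card_sdiff_of_subset hre]; omega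
        obtain ⟨u, hu⟩ := this
        obtain ⟨hu1, hu2⟩ := Finset.mem_sdiff.mp hu
        exact ⟨u, hu1, by simp [hℓ, dif_neg hu2, ht]⟩
  have hve : hverts [e].toFinset = e := by
    ext u; simp [hverts]
  have hinj : Set.InjOn ℓ ↑e := by
    apply Finset.injOn_of_card_image_eq
    rw [himg, Nat.card_Icc, hek]; omega
  refine ⟨ℓ, k, ⟨?_, ?_, ?_, ?_, hroot⟩⟩
  · intro f hf
    simp only [List.mem_singleton] at hf; subst hf
    exact ⟨1, le_refl _, by omega, by rw [himg]; congr 1; omega⟩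
  · rw [hve, himg]
  · rw [hve]
    exact filter_card_one hinj (by rw [himg]; exact Finset.mem_Icc.mpr ⟨le_refl _, by omega⟩)
  · intro u hu h2
    rw [hve] at hu
    have hℓu : ℓ u ∈ Finset.Icc 1 k := by rw [← himg]; exact Finset.mem_image_of_mem _ hu
    have hℓu' := Finset.mem_Icc.mp hℓu
    have : ℓ u - 1 ∈ Finset.Icc 1 k := Finset.mem_Icc.mpr ⟨by omega, by omega⟩
    rw [← himg] at this
    obtain ⟨w, hw, hw'⟩ := Finset.mem_image.mp this
    exact ⟨e, by simp, hu, w, hw, by omega⟩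
lemma hverts_append [DecidableEq α] {es : List (Finset α)} {e : Finset α} :
    hverts (es ++ [e]).toFinset = hverts es.toFinset ∪ e := by
  ext u
  simp only [mem_hverts, Finset.mem_union, List.mem_toFinset, List.mem_append,
    List.mem_singleton]
  constructor
  · rintro ⟨f, hf | rfl, hu⟩
    · exact Or.inl ⟨f, hf, hu⟩
    · exact Or.inr hu
  · rintro (⟨f, hf, hu⟩ | hu)
    · exact ⟨f, Or.inl hf, hu⟩
    · exact ⟨e, Or.inr rfl, hu⟩

lemma good_extend [DecidableEq α] {k : ℕ} (hk : 2 ≤ k) {r : Finset α}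
    {es : List (Finset α)} {e : Finset α} {ℓ : α → ℕ} {M : ℕ}
    (hG : Good k r es ℓ M) (hcards : ∀ f ∈ es, f.card = k) (hek : e.card = k)
    (hrsub : ∃ f ∈ es, r ⊆ f)
    {v : α} (hv : v ∈ e) (hvnew : ∀ f ∈ es, v ∉ f) {f0 : Finset α} (hf0 : f0 ∈ es)
    (hsub : e \ {v} ⊆ f0) :
    ∃ t, Good k r (es ++ [e]) (Function.update ℓ v t) (max M t) := by
  set Vold := hverts es.toFinset with hVold
  have hmemVold : ∀ u, u ∈ Vold ↔ ∃ f ∈ es, u ∈ f := fun u => by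
    rw [hVold, mem_hverts]; simp only [List.mem_toFinset]
  have hvVold : v ∉ Vold := by
    rw [hmemVold]; rintro ⟨f, hf, hu⟩; exact hvnew f hf hu
  obtain ⟨a, ha1, haM, himgf0⟩ := hG.win f0 hf0
  have hcIcc : (Finset.Icc a (a + (k-1))).card = k := by rw [Nat.card_Icc]; omega
  have hinj0 : Set.InjOn ℓ ↑f0 := by
    apply Finset.injOn_of_card_image_eq
    rw [himgf0, hcIcc, hcards f0 hf0]
  set f := e \ {v} with hf
  have hfcard : f.card = k - 1 := by
    rw [hf, card_sdiff_of_subset (by simpa using hv), hek]; simp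
  have hinjf : Set.InjOn ℓ ↑f := hinj0.mono (by exact_mod_cast hsub)
  have himgfsub : f.image ℓ ⊆ Finset.Icc a (a + (k-1)) := by
    rw [← himgf0]; exact Finset.image_subset_image hsub
  have hcimgf : (f.image ℓ).card = k - 1 := by
    rw [Finset.card_image_of_injOn hinjf, hfcard]
  have hDcard : ((Finset.Icc a (a + (k-1))) \ (f.image ℓ)).card = 1 := by
    rw [card_sdiff_of_subset himgfsub, hcIcc, hcimgf]; omega
  obtain ⟨b, hb⟩ := Finset.card_eq_one.mp hDcard
  have hbmem : b ∈ Finset.Icc a (a + (k-1)) ∧ b ∉ f.image ℓ := by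
    have : b ∈ (Finset.Icc a (a + (k-1))) \ (f.image ℓ) := hb ▸ Finset.mem_singleton_self b
    exact ⟨(Finset.mem_sdiff.mp this).1, (Finset.mem_sdiff.mp this).2⟩
  have hbIcc := Finset.mem_Icc.mp hbmem.1
  have himgf_eq : f.image ℓ = Finset.Icc a (a + (k-1)) \ {b} := by
    rw [← hb, Finset.sdiff_sdiff_self_left, Finset.inter_eq_right.mpr himgfsub]
  set t := if b = a then a + k else b with ht
  have ht1 : 2 ≤ t := by rw [ht]; split <;> omega
  have htM : t ≤ M + 1 := by rw [ht]; split <;> omega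
  set ℓ' := Function.update ℓ v t with hℓ'
  have hℓ'v : ℓ' v = t := Function.update_self v t ℓ
  have hvnotf : v ∉ f := by rw [hf]; simp
  have hefi : e = insert v f := by
    rw [hf, ← Finset.erase_eq, Finset.insert_erase hv]
  have himgℓ'f : f.image ℓ' = f.image ℓ := image_update_not_mem hvnotf ℓ t
  -- image of ℓ' on e
  set a' := if b = a then a + 1 else a with ha'
  have himge : e.image ℓ' = Finset.Icc a' (a' + (k-1)) := by
    rw [hefi, Finset.image_insert, hℓ'v, himgℓ'f, himgf_eq]
    ext x
    simp only [Finset.mem_insert, Finset.mem_sdiff, Finset.mem_Icc, Finset.mem_singleton]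
    rw [ht, ha']
    by_cases hba : b = a <;> simp [hba] <;> omega
  have ha'1 : 1 ≤ a' := by rw [ha']; split <;> omega
  have ha'M : a' + (k-1) ≤ max M t := by
    rw [ha', ht]; by_cases hba : b = a <;> simp [hba] <;> omega
  -- new vertex set
  have hfVold : f ⊆ Vold := fun u hu => (hmemVold u).mpr ⟨f0, hf0, hsub hu⟩
  have hVnew : hverts (es ++ [e]).toFinset = insert v Vold := by
    rw [hverts_append, ← hVold]
    ext u
    simp only [Finset.mem_union, Finset.mem_insert]
    constructor
    · rintro (hu | hu)
      · exact Or.inr hu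
      · rw [hefi, Finset.mem_insert] at hu
        rcases hu with rfl | hu
        · exact Or.inl rfl
        · exact Or.inr (hfVold hu)
    · rintro (rfl | hu)
      · exact Or.inr hv
      · exact Or.inl hu
  have himgVold : Vold.image ℓ' = Vold.image ℓ := image_update_not_mem hvVold ℓ t
  refine ⟨t, ?_⟩
  rw [← hℓ']
  refine ⟨?_, ?_, ?_, ?_, ?_⟩
  · -- win
    intro g hg
    rcases List.mem_append.mp hg with hg | hg
    · obtain ⟨ag, hag1, hagM, himgg⟩ := hG.win g hg
      have : v ∉ g := hvnew g hg
      exact ⟨ag, hag1, le_trans hagM (le_max_left _ _),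
        by rw [image_update_not_mem this ℓ t, himgg]⟩
    · simp only [List.mem_singleton] at hg; subst hg
      exact ⟨a', ha'1, ha'M, himge⟩
  · -- img
    rw [hVnew, Finset.image_insert, hℓ'v, himgVold, hG.img]
    ext x
    simp only [Finset.mem_insert, Finset.mem_Icc]
    omega
  · -- uniq
    rw [hVnew, Finset.filter_insert, if_neg (by rw [hℓ'v]; omega)]
    rw [Finset.filter_congr (fun u hu => by
      rw [hℓ', Function.update_of_ne (ne_of_mem_of_not_mem hu hvVold) _ _])]
    exact hG.uniq
  · -- link
    intro u hu h2
    rw [hVnew, Finset.mem_insert] at hu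
    rcases hu with rfl | hu
    · -- the new vertex
      rw [hℓ'v]
      have : t - 1 ∈ f.image ℓ := by
        rw [himgf_eq, Finset.mem_sdiff, Finset.mem_Icc, Finset.mem_singleton, ht]
        by_cases hba : b = a <;> simp [hba] <;> omega
      obtain ⟨w, hw, hw'⟩ := Finset.mem_image.mp this
      refine ⟨e, by simp, hv, w, by rw [hefi]; exact Finset.mem_insert_of_mem hw, ?_⟩
      rw [hℓ', Function.update_of_ne (ne_of_mem_of_not_mem hw hvnotf) _ _, hw']
      omega
    · have hℓ'u : ℓ' u = ℓ u :=
        Function.update_of_ne (ne_of_mem_of_not_mem hu hvVold) _ _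
      rw [hℓ'u] at h2 ⊢
      obtain ⟨g, hg, hug, w, hw, hw'⟩ := hG.link u hu h2
      have hwVold : w ∈ Vold := (hmemVold w).mpr ⟨g, hg, hw⟩
      exact ⟨g, List.mem_append.mpr (Or.inl hg), hug, w, hw,
        by rw [hℓ', Function.update_of_ne (ne_of_mem_of_not_mem hwVold hvVold) _ _]; exact hw'⟩
  · -- root
    obtain ⟨fr, hfr, hrfr⟩ := hrsub
    have : v ∉ r := fun h => hvnew fr hfr (hrfr h)
    rw [image_update_not_mem this ℓ t]
    exact hG.root
lemma good_build [DecidableEq α] {k : ℕ} (hk : 2 ≤ k) {r : Finset α} (hrk : r.card = k - 1) :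
    ∀ (n : ℕ) (es : List (Finset α)), es.length = n → es ≠ [] → ValidOrdering k es →
    r ⊆ es.getD 0 ∅ → ∃ ℓ M, Good k r es ℓ M := by
  intro n
  induction n using Nat.strong_induction_on with
  | _ n IH =>
  intro es hlen hne hval hr
  have hdecomp : es.dropLast ++ [es.getLast hne] = es := List.dropLast_append_getLast hne
  set es₀ := es.dropLast with hes₀
  set el := es.getLast hne with hel
  rcases eq_or_ne es₀ [] with h0 | h0
  · rw [h0, List.nil_append] at hdecomp
    have hget : es.getD 0 ∅ = el := by rw [← hdecomp]; rfl
    rw [← hdecomp]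
    exact good_base hk (hval.1 el (by rw [← hdecomp]; simp)) hrk (hget ▸ hr)
  · have hlen0 : es₀.length + 1 = es.length := by rw [← hdecomp]; simp
    have hval' := (valid_append (k := k) h0).mp (hdecomp ▸ hval)
    obtain ⟨hval₀, hcardel, vnew, hvnew, hvnewnotin, f0, hf0, hsubf0⟩ := hval'
    have hlpos : 0 < es₀.length := List.length_pos_iff.mpr h0
    have hget : es.getD 0 ∅ = es₀.getD 0 ∅ := by
      rw [← hdecomp]; exact List.getD_append _ _ _ _ hlpos
    have hlt : es₀.length < n := by rw [← hlen, ← hlen0]; omega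
    obtain ⟨ℓ, M, hG⟩ := IH es₀.length hlt es₀ rfl h0 hval₀ (hget ▸ hr)
    obtain ⟨t, hG'⟩ := good_extend hk hG hval₀.1 hcardel
      ⟨es₀.getD 0 ∅, getD_mem hlpos, hget ▸ hr⟩ hvnew hvnewnotin hf0 hsubf0
    exact ⟨_, _, hdecomp ▸ hG'⟩


/-- Every rooted tight `k`-tree (`k ≥ 2`) admits a layering. -/
theorem layering_exists [DecidableEq α] (k : ℕ) (hk : 2 ≤ k)
    (T : Finset (Finset α)) (hT : IsTightTree k T)
    (r : Finset α) (hr : InShadow k T r) :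
    ∃ (m : ℕ) (L : ℕ → Finset α), IsLayering k T r m L := by
  obtain ⟨hrk, estar, hestar, hrsub⟩ := hr
  obtain ⟨es, hne, hnd, htf, hval⟩ := hT
  have hestar' : estar ∈ es := by rwa [← htf, List.mem_toFinset] at hestar
  obtain ⟨es', hne', hnd', htf', hval', hhead'⟩ :=
    reroot es.length es rfl hne hnd hval estar hestar'
  have htf'' : es'.toFinset = T := htf'.trans htf
  obtain ⟨ℓ, M, hG⟩ := good_build hk hrk es'.length es' rfl hne' hval' (hhead' ▸ hrsub)
  have hV : hverts es'.toFinset = hverts T := by rw [htf'']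
  have hmemT : ∀ e, e ∈ es' ↔ e ∈ T := fun e => by rw [← htf'', List.mem_toFinset]
  have himg : (hverts T).image ℓ = Finset.Icc 1 M := hV ▸ hG.img
  have hrT : r ⊆ hverts T := fun u hu => mem_hverts.mpr ⟨estar, hestar, hrsub hu⟩
  have hrinj : Set.InjOn ℓ ↑r := by
    apply Finset.injOn_of_card_image_eq
    rw [hG.root, Nat.card_Icc, hrk]; omega
  refine ⟨M, fun i => (hverts T).filter (fun v => ℓ v = i), ?_, ?_, ?_, ?_, ?_, ?_, ?_, ?_⟩
  · -- nonempty
    intro i h1 h2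
    have : i ∈ Finset.Icc 1 M := Finset.mem_Icc.mpr ⟨h1, h2⟩
    rw [← himg] at this
    obtain ⟨v, hv, hv'⟩ := Finset.mem_image.mp this
    exact ⟨v, Finset.mem_filter.mpr ⟨hv, hv'⟩⟩
  · -- layer_subset
    intro i _ _
    exact Finset.filter_subset _ _
  · -- layer_disjoint
    intro i j _ _ _ _ hij
    rw [Finset.disjoint_left]
    intro u hu hu'
    obtain ⟨_, h1⟩ := Finset.mem_filter.mp hu
    obtain ⟨_, h2⟩ := Finset.mem_filter.mp hu'
    exact hij (h1 ▸ h2 ▸ rfl)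
  · -- cover
    intro v hv
    have : ℓ v ∈ Finset.Icc 1 M := himg ▸ Finset.mem_image_of_mem ℓ hv
    obtain ⟨h1, h2⟩ := Finset.mem_Icc.mp this
    exact ⟨ℓ v, h1, h2, Finset.mem_filter.mpr ⟨hv, rfl⟩⟩
  · -- root_inter
    intro i h1 h2
    have heq : r ∩ (hverts T).filter (fun v => ℓ v = i) = r.filter (fun v => ℓ v = i) := by
      ext u
      simp only [Finset.mem_inter, Finset.mem_filter]
      exact ⟨fun ⟨h, _, he⟩ => ⟨h, he⟩, fun ⟨h, he⟩ => ⟨h, hrT h, he⟩⟩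
    rw [heq]
    exact filter_card_one hrinj (by rw [hG.root]; exact Finset.mem_Icc.mpr ⟨h1, h2⟩)
  · -- first_card
    have := hG.uniq
    rwa [hV] at this
  · -- link
    intro i hi him v hv
    obtain ⟨hvT, hℓv⟩ := Finset.mem_filter.mp hv
    rw [← hV] at hvT
    obtain ⟨e, he, hve, w, hwe, hw'⟩ := hG.link v hvT (by omega)
    have hwT : w ∈ hverts T := mem_hverts.mpr ⟨e, (hmemT e).mp he, hwe⟩
    exact ⟨w, Finset.mem_filter.mpr ⟨hwT, by omega⟩, e, (hmemT e).mp he, hve, hwe⟩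
  · -- window
    intro e he
    obtain ⟨a, ha1, haM, himge⟩ := hG.win e ((hmemT e).mpr he)
    have hecard : e.card = k := hval'.1 e ((hmemT e).mpr he)
    have hinj : Set.InjOn ℓ ↑e := by
      apply Finset.injOn_of_card_image_eq
      rw [himge, Nat.card_Icc, hecard]; omega
    refine ⟨a, ha1, haM, ?_⟩
    intro i hai hik
    have heq : e ∩ (hverts T).filter (fun v => ℓ v = i) = e.filter (fun v => ℓ v = i) := by
      ext u
      simp only [Finset.mem_inter, Finset.mem_filter]
      exact ⟨fun ⟨h, _, h2⟩ => ⟨h, h2⟩, fun ⟨h, h2⟩ => ⟨h, mem_hverts.mpr ⟨e, he, h⟩, h2⟩⟩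
    rw [heq]
    exact filter_card_one hinj (by rw [himge]; exact Finset.mem_Icc.mpr ⟨hai, by omega⟩)
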